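/- Let ℏ, z ∈ ℂ with ℏ ≠ 0, and set u := (−z − ℏ/2)/(2ℏ). Assume that neither u nor u + 1/2 is a nonpositive integer (i.e. of the form −m with m ∈ ℕ). Then the function z ↦ i·G(−z) satisfies the same difference equation as G: (i·G(−z)) · (i·G(−(z+ℏ))) = 1/(z + ℏ/2). Hence i·G(−z) is an alternative non-perturbative completion of the Q-operator normalizing factor, also compatible with Baxter's TQ relation. -/

import Mathlib

open Complex

/-- The normalizing factor `G(z)` of the 't Hooft line / Q-operator. -/
noncomputable def Gnorm (ℏ z : ℂ) : ℂ :=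
  (2*ℏ) ^ (-(1/2 : ℂ)) * Complex.Gamma ((z + ℏ/2) / (2*ℏ)) /
    Complex.Gamma ((z + 3*ℏ/2) / (2*ℏ))

/-- the alternative non-perturbative completion `i·G(−z)` satisfies the
same difference equation as `G`: `(i G(−z)) (i G(−(z+ℏ))) = 1/(z + ℏ/2)`. -/
theorem I_Gnorm_neg_difference_equation (ℏ z : ℂ) (hℏ : ℏ ≠ 0)
    (u : ℂ) (hu : u = (-z - ℏ/2) / (2*ℏ))
    (h1 : ∀ m : ℕ, u ≠ -(m : ℂ)) (h2 : ∀ m : ℕ, u + 1/2 ≠ -(m : ℂ)) :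
    (Complex.I * Gnorm ℏ (-z)) * (Complex.I * Gnorm ℏ (-(z + ℏ))) = 1 / (z + ℏ/2) := by
  have h2ℏ : (2*ℏ) ≠ 0 := mul_ne_zero two_ne_zero hℏ
  have hu0 : u ≠ 0 := by simpa using h1 0
  have hGu : Complex.Gamma u ≠ 0 := Complex.Gamma_ne_zero h1
  have hGu2 : Complex.Gamma (u + 1/2) ≠ 0 := Complex.Gamma_ne_zero h2
  have e1 : (-z + ℏ/2) / (2*ℏ) = u + 1/2 := by rw [hu]; field_simp; ring
  have e2 : (-z + 3*ℏ/2) / (2*ℏ) = u + 1 := by rw [hu]; field_simp; ring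
  have e3 : (-(z+ℏ) + ℏ/2) / (2*ℏ) = u := by rw [hu]; field_simp; ring
  have e4 : (-(z+ℏ) + 3*ℏ/2) / (2*ℏ) = u + 1/2 := by rw [hu]; field_simp; ring
  have hz : z + ℏ/2 ≠ 0 := by
    intro h; apply hu0
    rw [hu, div_eq_zero_iff]; left; linear_combination -h
  have hpow : (2*ℏ)^(-(1/2:ℂ)) * (2*ℏ)^(-(1/2:ℂ)) = (2*ℏ)⁻¹ := by
    rw [← Complex.cpow_add _ _ h2ℏ]
    norm_num [Complex.cpow_neg_one]
  have hΓ1 : Complex.Gamma (u + 1) = u * Complex.Gamma u := Complex.Gamma_add_one u hu0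
  simp only [Gnorm, e1, e2, e3, e4, hΓ1]
  have huz : (2*ℏ) * u = -z - ℏ/2 := by rw [hu]; field_simp
  set P := (2*ℏ)^(-(1/2:ℂ)) with hP
  set a := Complex.Gamma u with ha
  set b := Complex.Gamma (u + 1/2) with hb
  rw [show z + ℏ/2 = -((2*ℏ) * u) from by linear_combination huz]
  have hPP : P * P * (2*ℏ) = 1 := by rw [hpow]; field_simp
  field_simp
  linear_combination (P*P*(2*ℏ)) * Complex.I_mul_I - hPP
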